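/- Every polytope $P \subset \mathbb{R}^n$ has a unique inclusion-maximal zonotope summand centered at the origin, denoted $\zeta(P)$; moreover, every zonotope summand of $P$ is a translate of a summand of $\zeta(P)$. -/

import Mathlib

open scoped Pointwise

noncomputable section

/-- A zonotope: a finite Minkowski sum of segments. -/
def IsZonotope {n : ℕ} (Z : Set (EuclideanSpace ℝ (Fin n))) : Prop :=
  ∃ (N : ℕ) (a b : Fin N → EuclideanSpace ℝ (Fin n)), Z = ∑ i, segment ℝ (a i) (b i)

/-- `L` is a summand of `K` if `K = L + M` for some convex body `M`. -/
def IsSummand {n : ℕ} (L K : Set (EuclideanSpace ℝ (Fin n))) : Prop :=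
  ∃ M : Set (EuclideanSpace ℝ (Fin n)), Convex ℝ M ∧ IsCompact M ∧ M.Nonempty ∧ K = L + M

namespace MaxZono
variable {n : ℕ}
local notation "V" => EuclideanSpace ℝ (Fin n)

def Wide (K : Set V) (z : V) : Prop :=
  ∀ x ∈ K, ∃ y, y ∈ K ∧ y + z ∈ K ∧ x ∈ segment ℝ y (y + z)

def cut (K : Set V) (z : V) : Set V := {x | x ∈ K ∧ x + z ∈ K}

lemma mem_segment_iff {y z x : V} :
    x ∈ segment ℝ y (y + z) ↔ ∃ σ : ℝ, 0 ≤ σ ∧ σ ≤ 1 ∧ x = y + σ • z := by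
  rw [segment_eq_image']
  simp only [add_sub_cancel_left, Set.mem_image, Set.mem_Icc]
  constructor
  · rintro ⟨θ, ⟨h0, h1⟩, hx⟩; exact ⟨θ, h0, h1, hx.symm⟩
  · rintro ⟨σ, h0, h1, hx⟩; exact ⟨σ, ⟨h0, h1⟩, hx.symm⟩

lemma wide_zero {K : Set V} : Wide K 0 := by
  intro x hx
  refine ⟨x, hx, by simpa using hx, ?_⟩
  rw [mem_segment_iff]; exact ⟨0, le_rfl, zero_le_one, by simp⟩

lemma convex_cut {K : Set V} (hK : Convex ℝ K) (z : V) : Convex ℝ (cut K z) := by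
  intro x hx y hy a b ha hb hab
  refine ⟨hK hx.1 hy.1 ha hb hab, ?_⟩
  have := hK hx.2 hy.2 ha hb hab
  convert this using 1
  simp only [smul_add]
  rw [add_add_add_comm]
  congr 1
  rw [← add_smul, hab, one_smul]

lemma isCompact_cut {K : Set V} (hK : IsCompact K) (hKc : IsClosed K) (z : V) :
    IsCompact (cut K z) := by
  have h1 : cut K z = K ∩ ((fun x => x + z) ⁻¹' K) := rfl
  rw [h1]
  exact hK.of_isClosed_subset (hKc.inter ((hKc.preimage (continuous_id.add continuous_const))))
    Set.inter_subset_left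

lemma cut_subset {K : Set V} {z : V} : cut K z ⊆ K := fun _ h => h.1

/-- `Wide` gives the canonical decomposition. -/
lemma decomp {K : Set V} (hK : Convex ℝ K) {z : V} (hw : Wide K z) :
    K = segment ℝ 0 z + cut K z := by
  apply Set.Subset.antisymm
  · intro x hx
    obtain ⟨y, hy, hyz, hseg⟩ := hw x hx
    rw [mem_segment_iff] at hseg
    obtain ⟨σ, h0, h1, rfl⟩ := hseg
    exact ⟨σ • z, ⟨1 - σ, σ, by linarith, h0, by ring, by simp⟩, y, ⟨hy, hyz⟩, by abel⟩
  · rintro x ⟨u, hu, m, hm, rfl⟩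
    rw [segment_eq_image'] at hu
    obtain ⟨σ, ⟨h0, h1⟩, rfl⟩ := hu
    simp only [zero_add, sub_zero]
    have := hK hm.1 hm.2 (a := 1 - σ) (b := σ) (by linarith) h0 (by ring)
    convert this using 1
    simp [smul_add, sub_smul]; abel

lemma nonempty_cut {K : Set V} {z : V} (hne : K.Nonempty) (hw : Wide K z) :
    (cut K z).Nonempty := by
  obtain ⟨x, hx⟩ := hne
  obtain ⟨y, hy, hyz, -⟩ := hw x hx
  exact ⟨y, hy, hyz⟩

lemma wide_of_segment_summand {K : Set V} {a b : V}
    (h : IsSummand (segment ℝ a b) K) : Wide K (b - a) := by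
  obtain ⟨M, -, -, -, rfl⟩ := h
  rintro x ⟨p, hp, m, hm, rfl⟩
  rw [segment_eq_image'] at hp
  obtain ⟨σ, ⟨h0, h1⟩, rfl⟩ := hp
  refine ⟨a + m, ⟨a, left_mem_segment ℝ a b, m, hm, rfl⟩, ?_, ?_⟩
  · refine ⟨b, right_mem_segment ℝ a b, m, hm, ?_⟩; abel
  · rw [mem_segment_iff]
    exact ⟨σ, h0, h1, by module⟩


/-- THE KEY LEMMA: peeling a segment summand preserves other segment summands. -/
lemma wide_cut {K : Set V} (hKv : Convex ℝ K) (hKc : IsCompact K)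
    {z z' : V} (hz' : z' ≠ 0) (hpar : ∀ t : ℝ, z ≠ t • z')
    (hwz : Wide K z) (hwz' : Wide K z') : Wide (cut K z) z' := by
  intro p hp
  -- the functional f with f z = 1, f z' = 0
  set c : ℝ := (inner ℝ z' z : ℝ) / ‖z'‖ ^ 2 with hc
  set u : V := z - c • z' with hu
  have hz'n : ‖z'‖ ^ 2 ≠ 0 := pow_ne_zero 2 (norm_ne_zero_iff.2 hz')
  have huz' : (inner ℝ z' u : ℝ) = 0 := by
    have : (inner ℝ z' u : ℝ) = inner ℝ z' z - c * inner ℝ z' z' := by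
      simp only [hu, inner_sub_right, real_inner_smul_right]
    rw [this, real_inner_self_eq_norm_sq, hc, div_mul_cancel₀ _ hz'n, sub_self]
  have hu0 : u ≠ 0 := by
    intro h
    exact hpar c (by rw [← sub_eq_zero]; exact h ▸ rfl)
  have huz'2 : (inner ℝ u z' : ℝ) = 0 := by rw [real_inner_comm]; exact huz'
  have huu : (inner ℝ u z : ℝ) = ‖u‖ ^ 2 := by
    have hzu : z = u + c • z' := by rw [hu]; abel
    rw [hzu, inner_add_right, real_inner_smul_right, huz'2, real_inner_self_eq_norm_sq]
    ring
  set f : V → ℝ := fun x => (inner ℝ u x : ℝ) / ‖u‖ ^ 2 with hf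
  have hnu : ‖u‖ ^ 2 ≠ 0 := pow_ne_zero 2 (norm_ne_zero_iff.2 hu0)
  have hfadd : ∀ x y : V, f (x + y) = f x + f y := by
    intro x y; simp only [hf, inner_add_right, add_div]
  have hfsmul : ∀ (t : ℝ) (x : V), f (t • x) = t * f x := by
    intro t x; simp only [hf, real_inner_smul_right]; ring
  have hfz : f z = 1 := by simp only [hf, huu]; field_simp
  have hfz' : f z' = 0 := by
    simp only [hf, huz'2, zero_div]
  have hfcont : Continuous f := by
    simp only [hf]
    exact (continuous_const.inner continuous_id).div_const _
  have hfsub : ∀ x y : V, f (x - y) = f x - f y := by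
    intro x y; have := hfadd (x - y) y; simp at this; linarith
  -- the plane through p spanned by z, z'
  set E : Set V := {x | ∃ a b : ℝ, x = p + a • z + b • z'} with hE
  have hEmem : ∀ x ∈ E, ∀ a b : ℝ, x + a • z + b • z' ∈ E := by
    rintro x ⟨a₀, b₀, rfl⟩ a b
    exact ⟨a₀ + a, b₀ + b, by module⟩
  have hpE : p ∈ E := ⟨0, 0, by simp⟩
  have hEconv : Convex ℝ E := by
    rintro x ⟨a₁, b₁, rfl⟩ y ⟨a₂, b₂, rfl⟩ s t hs ht hst
    refine ⟨s * a₁ + t * a₂, s * b₁ + t * b₂, ?_⟩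
    have h2 : s • (p + a₁ • z + b₁ • z') + t • (p + a₂ • z + b₂ • z') =
        (s + t) • p + (s * a₁ + t * a₂) • z + (s * b₁ + t * b₂) • z' := by module
    rw [h2, hst, one_smul]
  have hEclosed : IsClosed E := by
    have hE2 : E = p +ᵥ (Submodule.span ℝ {z, z'} : Set V) := by
      ext x
      rw [Set.mem_vadd_set]
      constructor
      · rintro ⟨a, b, rfl⟩
        exact ⟨a • z + b • z', Submodule.mem_span_pair.2 ⟨a, b, rfl⟩, by
          simp only [vadd_eq_add]; abel⟩
      · rintro ⟨y, hy, rfl⟩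
        obtain ⟨a, b, rfl⟩ := Submodule.mem_span_pair.1 hy
        exact ⟨a, b, by simp only [vadd_eq_add]; abel⟩
    rw [hE2]
    have : IsClosed ((Submodule.span ℝ {z, z'} : Submodule ℝ (EuclideanSpace ℝ (Fin n))) : Set V) :=
      Submodule.closed_of_finiteDimensional _
    exact this.vadd p
  set KE : Set V := K ∩ E with hKE
  have hKEc : IsCompact KE := hKc.inter_right hEclosed
  have hKEne : KE.Nonempty := ⟨p, hp.1, hpE⟩
  obtain ⟨ptop, hptop, hmax⟩ := hKEc.exists_isMaxOn hKEne hfcont.continuousOn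
  obtain ⟨pbot, hpbot, hmin⟩ := hKEc.exists_isMinOn hKEne hfcont.continuousOn
  set tmax : ℝ := f ptop
  set tmin : ℝ := f pbot
  -- from a point of KE at top level, can go down by z; at bottom level, up by z
  have stepTop : ∀ r, r ∈ K → r ∈ E → f r = tmax → r - z ∈ K := by
    intro r hrK hrE hfr
    obtain ⟨y, hyK, hyzK, hseg⟩ := hwz r hrK
    rw [mem_segment_iff] at hseg
    obtain ⟨σ, h0, h1, hr⟩ := hseg
    have hyE : y ∈ E := by
      have : y = r + (-σ) • z + (0:ℝ) • z' := by rw [hr]; module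
      rw [this]; exact hEmem r hrE _ _
    have hyzE : y + z ∈ E := by
      have : y + z = y + (1:ℝ) • z + (0:ℝ) • z' := by module
      rw [this]; exact hEmem y hyE _ _
    have hle : f (y + z) ≤ tmax := hmax ⟨hyzK, hyzE⟩
    have hfy : f r = f y + σ := by rw [hr, hfadd, hfsmul, hfz]; ring
    rw [hfadd, hfz] at hle
    have hσ : σ = 1 := by linarith [hfr ▸ hfy]
    have : y = r - z := by rw [hr, hσ]; module
    exact this ▸ hyK
  have stepBot : ∀ r, r ∈ K → r ∈ E → f r = tmin → r + z ∈ K := by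
    intro r hrK hrE hfr
    obtain ⟨y, hyK, hyzK, hseg⟩ := hwz r hrK
    rw [mem_segment_iff] at hseg
    obtain ⟨σ, h0, h1, hr⟩ := hseg
    have hyE : y ∈ E := by
      have : y = r + (-σ) • z + (0:ℝ) • z' := by rw [hr]; module
      rw [this]; exact hEmem r hrE _ _
    have hge : tmin ≤ f y := hmin ⟨hyK, hyE⟩
    have hfy : f r = f y + σ := by rw [hr, hfadd, hfsmul, hfz]; ring
    have hσ : σ = 0 := by linarith [hfr ▸ hfy]
    have : y = r := by rw [hr, hσ]; simp
    exact this ▸ hyzK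
  -- segments at top and bottom inside `cut K z`
  have topSeg : ∃ A₁, A₁ ∈ cut K z ∧ A₁ + z' ∈ cut K z ∧ A₁ ∈ E ∧ f A₁ = tmax - 1 := by
    obtain ⟨y₀, hy₀K, hy₀z'K, hseg⟩ := hwz' ptop hptop.1
    rw [mem_segment_iff] at hseg
    obtain ⟨σ, h0, h1, hptopEq⟩ := hseg
    have hy₀E : y₀ ∈ E := by
      have : y₀ = ptop + (0:ℝ) • z + (-σ) • z' := by rw [hptopEq]; module
      rw [this]; exact hEmem _ hptop.2 _ _
    have hy₀z'E : y₀ + z' ∈ E := by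
      have : y₀ + z' = y₀ + (0:ℝ) • z + (1:ℝ) • z' := by module
      rw [this]; exact hEmem _ hy₀E _ _
    have hfy₀ : f y₀ = tmax := by
      have h1 : f ptop = f y₀ + σ * f z' := by rw [hptopEq, hfadd, hfsmul]
      have h2 : f y₀ ≤ tmax := hmax ⟨hy₀K, hy₀E⟩
      rw [hfz'] at h1; simp at h1; rw [← h1]
    have hfy₀z' : f (y₀ + z') = tmax := by rw [hfadd, hfz']; simp [hfy₀]
    have h3 : y₀ - z ∈ K := stepTop y₀ hy₀K hy₀E hfy₀
    have h4 : y₀ + z' - z ∈ K := stepTop _ hy₀z'K hy₀z'E hfy₀z'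
    refine ⟨y₀ - z, ⟨h3, by simpa using hy₀K⟩, ⟨by convert h4 using 1; abel, by
      convert hy₀z'K using 1; abel⟩, ?_, ?_⟩
    · have : y₀ - z = y₀ + (-1:ℝ) • z + (0:ℝ) • z' := by module
      rw [this]; exact hEmem _ hy₀E _ _
    · rw [hfsub, hfz, hfy₀]
  have botSeg : ∃ A₀, A₀ ∈ cut K z ∧ A₀ + z' ∈ cut K z ∧ A₀ ∈ E ∧ f A₀ = tmin := by
    obtain ⟨y₀, hy₀K, hy₀z'K, hseg⟩ := hwz' pbot hpbot.1
    rw [mem_segment_iff] at hseg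
    obtain ⟨σ, h0, h1, hpbotEq⟩ := hseg
    have hy₀E : y₀ ∈ E := by
      have : y₀ = pbot + (0:ℝ) • z + (-σ) • z' := by rw [hpbotEq]; module
      rw [this]; exact hEmem _ hpbot.2 _ _
    have hy₀z'E : y₀ + z' ∈ E := by
      have : y₀ + z' = y₀ + (0:ℝ) • z + (1:ℝ) • z' := by module
      rw [this]; exact hEmem _ hy₀E _ _
    have hfy₀ : f y₀ = tmin := by
      have h1 : f pbot = f y₀ + σ * f z' := by rw [hpbotEq, hfadd, hfsmul]
      have h2 : tmin ≤ f y₀ := hmin ⟨hy₀K, hy₀E⟩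
      rw [hfz'] at h1; simp at h1; rw [← h1]
    have hfy₀z' : f (y₀ + z') = tmin := by rw [hfadd, hfz']; simp [hfy₀]
    exact ⟨y₀, ⟨hy₀K, stepBot _ hy₀K hy₀E hfy₀⟩,
      ⟨hy₀z'K, stepBot _ hy₀z'K hy₀z'E hfy₀z'⟩, hy₀E, hfy₀⟩
  obtain ⟨A₁, hA₁, hA₁z', hA₁E, hfA₁⟩ := topSeg
  obtain ⟨A₀, hA₀, hA₀z', hA₀E, hfA₀⟩ := botSeg
  -- the level of p
  set t : ℝ := f p with ht
  have htlow : tmin ≤ t := hmin ⟨hp.1, hpE⟩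
  have hthigh : t ≤ tmax - 1 := by
    have hpzE : p + z ∈ E := by
      have : p + z = p + (1:ℝ) • z + (0:ℝ) • z' := by module
      rw [this]; exact hEmem _ hpE _ _
    have h5 := hmax ⟨hp.2, hpzE⟩
    simp only [Set.mem_setOf_eq] at h5
    rw [hfadd, hfz] at h5; linarith
  -- convex combination A at level t
  have hMconv : Convex ℝ (cut K z) := convex_cut hKv z
  obtain ⟨A, hA, hAz', hAE, hfA⟩ :
      ∃ A, A ∈ cut K z ∧ A + z' ∈ cut K z ∧ A ∈ E ∧ f A = t := by
    rcases eq_or_lt_of_le (le_trans htlow hthigh : tmin ≤ tmax - 1) with hd | hd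
    · have ht' : t = tmin := le_antisymm (hd ▸ hthigh) htlow
      exact ⟨A₀, hA₀, hA₀z', hA₀E, hfA₀.trans ht'.symm⟩
    · set lam : ℝ := (t - tmin) / (tmax - 1 - tmin) with hlam
      have hden : 0 < tmax - 1 - tmin := by linarith
      have hlam0 : 0 ≤ lam := div_nonneg (by linarith) hden.le
      have hlam1 : lam ≤ 1 := (div_le_one hden).2 (by linarith)
      refine ⟨(1 - lam) • A₀ + lam • A₁, hMconv hA₀ hA₁ (by linarith) hlam0 (by ring),
        ?_, ?_, ?_⟩
      · have : (1 - lam) • A₀ + lam • A₁ + z' =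
            (1 - lam) • (A₀ + z') + lam • (A₁ + z') := by module
        rw [this]
        exact hMconv hA₀z' hA₁z' (by linarith) hlam0 (by ring)
      · exact hEconv hA₀E hA₁E (by linarith) hlam0 (by ring)
      · have e1 : f ((1 - lam) • A₀ + lam • A₁) = (1 - lam) * f A₀ + lam * f A₁ := by
          rw [hfadd, hfsmul, hfsmul]
        rw [e1, hfA₀, hfA₁, hlam]
        field_simp
        ring
  -- A = p + b • z'
  obtain ⟨a, b, hab⟩ := hAE
  have ha0 : a = 0 := by
    have : f A = f p + a * f z + b * f z' := by
      rw [hab, hfadd, hfadd, hfsmul, hfsmul]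
    rw [hfz, hfz', hfA] at this
    linarith [this, ht]
  have hApb : A = p + b • z' := by rw [hab, ha0]; module
  -- trichotomy
  rcases lt_trichotomy b 0 with hb | hb | hb
  · rcases le_or_gt (-1) b with hb1 | hb1
    · -- y := A
      refine ⟨A, hA, hAz', ?_⟩
      rw [mem_segment_iff]
      exact ⟨-b, by linarith, by linarith, by rw [hApb]; module⟩
    · -- y := p - z'
      have hmu0 : 0 < (b + 1) / b := div_pos_of_neg_of_neg (by linarith) hb
      have hmu1 : (b + 1) / b ≤ 1 := by
        have h1b : 1 / b < 0 := one_div_neg.2 hb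
        rw [add_div, div_self hb.ne]; linarith
      have hpz' : p - z' ∈ cut K z := by
        have hcomb := hMconv hA hp (a := 1 - (b+1)/b) (b := (b+1)/b)
          (by linarith) hmu0.le (by ring)
        have : (1 - (b+1)/b) • A + ((b+1)/b) • p = p - z' := by
          rw [hApb]
          have hbne : b ≠ 0 := hb.ne
          match_scalars <;> field_simp <;> ring
        rwa [this] at hcomb
      refine ⟨p - z', hpz', by simpa using hp, ?_⟩
      rw [mem_segment_iff]
      exact ⟨1, zero_le_one, le_rfl, by module⟩
  · refine ⟨A, hA, hAz', ?_⟩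
    rw [mem_segment_iff]
    exact ⟨0, le_rfl, zero_le_one, by rw [hApb, hb]; module⟩
  · -- y := p
    have hpz' : p + z' ∈ cut K z := by
      have hcomb := hMconv hp hAz' (a := 1 - 1/(b+1)) (b := 1/(b+1))
        (by rw [sub_nonneg]; apply div_le_one_of_le₀ <;> linarith) (by positivity) (by ring)
      have : (1 - 1/(b+1)) • p + (1/(b+1)) • (A + z') = p + z' := by
        rw [hApb]
        have hbne : b + 1 ≠ 0 := by linarith
        match_scalars <;> field_simp <;> ring
      rwa [this] at hcomb
    refine ⟨p, hp, hpz', ?_⟩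
    rw [mem_segment_iff]
    exact ⟨0, le_rfl, zero_le_one, by module⟩


-- === block C ===
lemma zero_set_eq : (0 : Set V) = {0} := by ext x; simp [Set.mem_zero]

lemma isCompact_seg (a b : V) : IsCompact (segment ℝ a b) := by
  rw [segment_eq_image']
  exact isCompact_Icc.image (by fun_prop)

lemma zero_set_props : Convex ℝ (0 : Set V) ∧ IsCompact (0 : Set V) ∧ (0 : Set V).Nonempty := by
  refine ⟨?_, ?_, ?_⟩
  · intro x hx y hy a b ha hb hab
    rw [Set.mem_zero] at *
    simp [hx, hy, ← add_smul, hab]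
  · have h0 : (0 : Set V) = {(0:V)} := by ext x; simp [Set.mem_zero]
    rw [h0]; exact isCompact_singleton
  · exact ⟨0, Set.mem_zero.2 rfl⟩

lemma sum_sets_props {ι : Type} [DecidableEq ι] (s : Finset ι) (f : ι → Set V)
    (h : ∀ i ∈ s, Convex ℝ (f i) ∧ IsCompact (f i) ∧ (f i).Nonempty) :
    Convex ℝ (∑ i ∈ s, f i) ∧ IsCompact (∑ i ∈ s, f i) ∧ (∑ i ∈ s, f i).Nonempty := by
  induction s using Finset.induction_on with
  | empty => simpa using zero_set_props
  | insert _ _ hx ih =>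
    rename_i a s'
    rw [Finset.sum_insert hx]
    have h1 := h a (Finset.mem_insert_self a s')
    have h2 := ih fun i hi => h i (Finset.mem_insert_of_mem hi)
    exact ⟨h1.1.add h2.1, h1.2.1.add h2.2.1, h1.2.2.add h2.2.2⟩

lemma list_sum_sets_props (L : List (Set V))
    (h : ∀ S ∈ L, Convex ℝ S ∧ IsCompact S ∧ S.Nonempty) :
    Convex ℝ L.sum ∧ IsCompact L.sum ∧ L.sum.Nonempty := by
  induction L with
  | nil => simpa using zero_set_props
  | cons S L ih =>
    rw [List.sum_cons]
    have h1 := h S (List.mem_cons_self)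
    have h2 := ih fun T hT => h T (List.mem_cons_of_mem _ hT)
    exact ⟨h1.1.add h2.1, h1.2.1.add h2.2.1, h1.2.2.add h2.2.2⟩

lemma seg_props (a b : V) : Convex ℝ (segment ℝ a b) ∧ IsCompact (segment ℝ a b) ∧
    (segment ℝ a b).Nonempty :=
  ⟨convex_segment a b, isCompact_seg a b, ⟨a, left_mem_segment ℝ a b⟩⟩

lemma isSummand_trans {A B C : Set V} (h1 : IsSummand A B) (h2 : IsSummand B C) :
    IsSummand A C := by
  obtain ⟨M1, hM1v, hM1c, hM1n, rfl⟩ := h1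
  obtain ⟨M2, hM2v, hM2c, hM2n, rfl⟩ := h2
  exact ⟨M1 + M2, hM1v.add hM2v, hM1c.add hM2c, hM1n.add hM2n, add_assoc _ _ _⟩

lemma cut_zero {K : Set V} : cut K 0 = K := by
  ext x; simp [cut]

/-- peeling all maximal segments in a list of pairwise non-parallel directions -/
lemma peel : ∀ (L : List (EuclideanSpace ℝ (Fin n))) (w : EuclideanSpace ℝ (Fin n) → ℝ),
    L.Pairwise (fun a b => ∀ t : ℝ, a ≠ t • b) →
    (∀ d ∈ L, 0 ≤ w d) →
    ∀ K : Set V, Convex ℝ K → IsCompact K → K.Nonempty →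
    (∀ d ∈ L, Wide K (w d • d)) →
    ∃ M : Set V, Convex ℝ M ∧ IsCompact M ∧ M.Nonempty ∧
      K = (L.map fun d => segment ℝ 0 (w d • d)).sum + M := by
  intro L
  induction L with
  | nil =>
    intro w _ _ K hKv hKc hKn _
    exact ⟨K, hKv, hKc, hKn, by simp⟩
  | cons d L ih =>
    intro w hpw hw0 K hKv hKc hKn hwide
    set z : V := w d • d with hz
    have hwz : Wide K z := hwide d (List.mem_cons_self)
    set M₀ : Set V := cut K z with hM₀
    have hM₀v : Convex ℝ M₀ := convex_cut hKv z
    have hM₀c : IsCompact M₀ := isCompact_cut hKc hKc.isClosed z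
    have hM₀n : M₀.Nonempty := nonempty_cut hKn hwz
    have hdec : K = segment ℝ 0 z + M₀ := decomp hKv hwz
    have hwideM₀ : ∀ d' ∈ L, Wide M₀ (w d' • d') := by
      intro d' hd'
      by_cases hz'0 : w d' • d' = 0
      · rw [hz'0]; exact wide_zero
      · by_cases hz0 : z = 0
        · rw [hM₀, hz0, cut_zero]; exact hwide d' (List.mem_cons_of_mem _ hd')
        · apply wide_cut hKv hKc hz'0 _ hwz (hwide d' (List.mem_cons_of_mem _ hd'))
          intro t ht
          have hwd : w d ≠ 0 := by
            intro h0; rw [hz, h0, zero_smul] at hz0; exact hz0 rfl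
          have h1 : w d • d = (t * w d') • d' := by rw [← hz, ht, smul_smul]
          have hd_eq : d = ((w d)⁻¹ * (t * w d')) • d' := by
            rw [← smul_smul, ← h1, smul_smul, inv_mul_cancel₀ hwd, one_smul]
          exact (List.pairwise_cons.1 hpw).1 d' hd' _ hd_eq
    obtain ⟨M, hMv, hMc, hMn, hMeq⟩ := ih w (List.pairwise_cons.1 hpw).2
      (fun d' hd' => hw0 d' (List.mem_cons_of_mem _ hd')) M₀ hM₀v hM₀c hM₀n hwideM₀
    refine ⟨M, hMv, hMc, hMn, ?_⟩
    rw [List.map_cons, List.sum_cons, add_assoc, ← hMeq, ← hdec]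

def Tset (K : Set V) (d : V) : Set ℝ := {t | 0 ≤ t ∧ Wide K (t • d)}

lemma zero_mem_Tset (K : Set V) (d : V) : (0:ℝ) ∈ Tset K d :=
  ⟨le_rfl, by rw [zero_smul]; exact wide_zero⟩

lemma bddAbove_Tset {K : Set V} (hK : IsCompact K) (hKn : K.Nonempty) {d : V} (hd : d ≠ 0) :
    BddAbove (Tset K d) := by
  obtain ⟨C, hC⟩ := Metric.isBounded_iff.1 hK.isBounded
  obtain ⟨x₀, hx₀⟩ := hKn
  refine ⟨C / ‖d‖, fun t ht => ?_⟩
  obtain ⟨y, hy, hyz, -⟩ := ht.2 x₀ hx₀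
  have h1 : dist y (y + t • d) ≤ C := hC hy hyz
  have h2 : dist y (y + t • d) = t * ‖d‖ := by
    rw [dist_eq_norm]
    have h3 : y - (y + t • d) = -(t • d) := by module
    rw [h3, norm_neg, norm_smul, Real.norm_eq_abs, abs_of_nonneg ht.1]
  rw [le_div_iff₀ (norm_pos_iff.2 hd)]
  linarith [h2 ▸ h1]

lemma isClosed_Tset {K : Set V} (hK : IsCompact K) (d : V) : IsClosed (Tset K d) := by
  apply IsSeqClosed.isClosed
  intro ts t hts hlim
  constructor
  · exact le_of_tendsto_of_tendsto' tendsto_const_nhds hlim fun k => (hts k).1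
  · intro x hx
    have Hex : ∀ k, ∃ yσ : EuclideanSpace ℝ (Fin n) × ℝ,
        (yσ.1 ∈ K ∧ yσ.1 + ts k • d ∈ K) ∧ (0 ≤ yσ.2 ∧ yσ.2 ≤ 1) ∧
        x = yσ.1 + yσ.2 • ts k • d := by
      intro k
      obtain ⟨yk, hyk, hykz, hseg⟩ := (hts k).2 x hx
      rw [mem_segment_iff] at hseg
      obtain ⟨σk, h0, h1, hxk⟩ := hseg
      exact ⟨⟨yk, σk⟩, ⟨hyk, hykz⟩, ⟨h0, h1⟩, hxk⟩
    choose yσ hy hyK hσ using Hex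
    set y : ℕ → EuclideanSpace ℝ (Fin n) := fun k => (yσ k).1 with hydef
    set σ : ℕ → ℝ := fun k => (yσ k).2 with hσdef
    have hcomp : IsCompact (K ×ˢ Set.Icc (0:ℝ) 1) := hK.prod isCompact_Icc
    have hmem : ∀ k, (y k, σ k) ∈ K ×ˢ Set.Icc (0:ℝ) 1 := fun k =>
      ⟨(hy k).1, (hyK k).1, (hyK k).2⟩
    obtain ⟨⟨ylim, σlim⟩, hmemlim, φ, hφmono, hφlim⟩ := hcomp.tendsto_subseq hmem
    have hylim : Filter.Tendsto (fun k => y (φ k)) Filter.atTop (nhds ylim) :=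
      (continuous_fst.tendsto _).comp hφlim
    have hσlim : Filter.Tendsto (fun k => σ (φ k)) Filter.atTop (nhds σlim) :=
      (continuous_snd.tendsto _).comp hφlim
    have htφ : Filter.Tendsto (fun k => ts (φ k)) Filter.atTop (nhds t) :=
      hlim.comp hφmono.tendsto_atTop
    have hzd : Filter.Tendsto (fun k => y (φ k) + ts (φ k) • d) Filter.atTop
        (nhds (ylim + t • d)) := hylim.add (htφ.smul_const d)
    have hyzlim : ylim + t • d ∈ K :=
      hK.isClosed.mem_of_tendsto hzd (Filter.Eventually.of_forall fun k => (hy (φ k)).2)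
    have hxlim : Filter.Tendsto (fun k => y (φ k) + σ (φ k) • ts (φ k) • d)
        Filter.atTop (nhds (ylim + σlim • t • d)) :=
      hylim.add (hσlim.smul (htφ.smul_const d))
    have hxconst : Filter.Tendsto (fun k => y (φ k) + σ (φ k) • ts (φ k) • d)
        Filter.atTop (nhds x) := by
      have heq : (fun k => y (φ k) + σ (φ k) • ts (φ k) • d) = fun _ => x := by
        funext k; exact (hσ (φ k)).symm
      rw [heq]; exact tendsto_const_nhds
    have hxeq : x = ylim + σlim • t • d := tendsto_nhds_unique hxconst hxlim
    refine ⟨ylim, hmemlim.1, hyzlim, ?_⟩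
    rw [mem_segment_iff]
    exact ⟨σlim, hmemlim.2.1, hmemlim.2.2, hxeq⟩

lemma add_self_cancel {K D : Set V} (hK : IsCompact K) (hKn : K.Nonempty)
    (hDn : D.Nonempty) (h : K = K + D) : D = {0} := by
  have hsub : ∀ d ∈ D, d = 0 := by
    intro d hd
    obtain ⟨x₀, hx₀⟩ := hKn
    have hiter : ∀ m : ℕ, x₀ + (m : ℝ) • d ∈ K := by
      intro m
      induction m with
      | zero => simpa using hx₀
      | succ m ihm =>
        have : x₀ + ((m : ℝ) + 1) • d = (x₀ + (m:ℝ) • d) + d := by module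
        rw [Nat.cast_succ, this, h]
        exact Set.add_mem_add ihm hd
    obtain ⟨C, hC⟩ := Metric.isBounded_iff.1 hK.isBounded
    by_contra hd0
    have hnorm : 0 < ‖d‖ := norm_pos_iff.2 hd0
    obtain ⟨m, hm⟩ := exists_nat_gt (C / ‖d‖)
    have h1 : dist x₀ (x₀ + (m : ℝ) • d) ≤ C := hC hx₀ (hiter m)
    rw [dist_eq_norm] at h1
    have h2 : ‖x₀ - (x₀ + (m:ℝ) • d)‖ = (m:ℝ) * ‖d‖ := by
      have : x₀ - (x₀ + (m:ℝ) • d) = -((m:ℝ) • d) := by module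
      rw [this, norm_neg, norm_smul, Real.norm_eq_abs, abs_of_nonneg (by positivity)]
    rw [h2] at h1
    rw [div_lt_iff₀ hnorm] at hm
    linarith
  obtain ⟨d₀, hd₀⟩ := hDn
  have := hsub d₀ hd₀
  ext x
  simp only [Set.mem_singleton_iff]
  exact ⟨fun hx => hsub x hx, fun hx => hx ▸ (this ▸ hd₀)⟩

-- === block D ===
lemma mem_segment_zero_iff {v x : V} :
    x ∈ segment ℝ 0 v ↔ ∃ σ : ℝ, 0 ≤ σ ∧ σ ≤ 1 ∧ x = σ • v := by
  rw [segment_eq_image']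
  simp only [Set.mem_image, Set.mem_Icc, zero_add, sub_zero]
  exact ⟨fun ⟨θ, ⟨h0, h1⟩, hx⟩ => ⟨θ, h0, h1, hx.symm⟩,
    fun ⟨σ, h0, h1, hx⟩ => ⟨σ, ⟨h0, h1⟩, hx.symm⟩⟩

lemma segment_eq_add_seg0 (a b : V) : segment ℝ a b = {a} + segment ℝ 0 (b - a) := by
  ext x
  rw [segment_eq_image']
  simp only [Set.singleton_add, Set.image_image, Set.mem_image, Set.mem_Icc]
  constructor
  · rintro ⟨θ, hθ, rfl⟩
    exact ⟨θ • (b - a), mem_segment_zero_iff.2 ⟨θ, hθ.1, hθ.2, rfl⟩, rfl⟩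
  · rintro ⟨y, hy, rfl⟩
    obtain ⟨σ, h0, h1, rfl⟩ := mem_segment_zero_iff.1 hy
    exact ⟨σ, ⟨h0, h1⟩, rfl⟩

lemma seg0_neg (v : V) : segment ℝ 0 v = {v} + segment ℝ 0 (-v) := by
  ext x
  simp only [Set.singleton_add, Set.image_add_left, Set.mem_preimage]
  rw [mem_segment_zero_iff, mem_segment_zero_iff]
  constructor
  · rintro ⟨σ, h0, h1, rfl⟩
    exact ⟨1 - σ, by linarith, by linarith, by module⟩
  · rintro ⟨σ, h0, h1, hx⟩
    refine ⟨1 - σ, by linarith, by linarith, ?_⟩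
    have : x = v + σ • (-v) := by
      have h2 := congrArg (fun y => v + y) hx
      simpa using h2
    rw [this]; module

lemma seg_add_seg {s t : ℝ} (hs : 0 ≤ s) (ht : 0 ≤ t) (d : V) :
    segment ℝ 0 (s • d) + segment ℝ 0 (t • d) = segment ℝ 0 ((s + t) • d) := by
  rcases eq_or_lt_of_le (add_nonneg hs ht) with hst | hst
  · have hs0 : s = 0 := by linarith
    have ht0 : t = 0 := by linarith
    subst hs0; subst ht0
    simp [segment_same, Set.singleton_add_singleton]
  · ext x
    constructor
    · rintro ⟨y1, hy1, y2, hy2, rfl⟩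
      obtain ⟨σ, hσ0, hσ1, rfl⟩ := mem_segment_zero_iff.1 hy1
      obtain ⟨τ, hτ0, hτ1, rfl⟩ := mem_segment_zero_iff.1 hy2
      rw [mem_segment_zero_iff]
      refine ⟨(σ * s + τ * t) / (s + t), by positivity, ?_, ?_⟩
      · rw [div_le_one hst]; nlinarith
      · have hne := hst.ne'
        match_scalars
        field_simp
    · intro hx
      obtain ⟨ρ, hρ0, hρ1, rfl⟩ := mem_segment_zero_iff.1 hx
      refine ⟨ρ • (s • d), mem_segment_zero_iff.2 ⟨ρ, hρ0, hρ1, rfl⟩,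
        ρ • (t • d), mem_segment_zero_iff.2 ⟨ρ, hρ0, hρ1, rfl⟩, ?_⟩
      module

lemma seg_sum_same_dir {ι : Type} [DecidableEq ι] (F : Finset ι) (γ : ι → ℝ)
    (hγ : ∀ i ∈ F, 0 ≤ γ i) (d : V) :
    ∑ i ∈ F, segment ℝ 0 (γ i • d) = segment ℝ 0 ((∑ i ∈ F, γ i) • d) := by
  induction F using Finset.induction_on with
  | empty => simp [segment_same, zero_set_eq]
  | insert _ _ hx ih =>
    rename_i a F'
    rw [Finset.sum_insert hx, Finset.sum_insert hx,
      ih (fun i hi => hγ i (Finset.mem_insert_of_mem hi)),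
      seg_add_seg (hγ a (Finset.mem_insert_self a F'))
        (Finset.sum_nonneg fun i hi => hγ i (Finset.mem_insert_of_mem hi))]

lemma sum_singleton_add {ι : Type} [DecidableEq ι] (F : Finset ι) (c : ι → V) (S : ι → Set V) :
    ∑ i ∈ F, ({c i} + S i) = {∑ i ∈ F, c i} + ∑ i ∈ F, S i := by
  induction F using Finset.induction_on with
  | empty => simp [zero_set_eq]
  | insert _ _ hx ih =>
    rename_i a F'
    rw [Finset.sum_insert hx, Finset.sum_insert hx, Finset.sum_insert hx, ih]
    rw [← Set.singleton_add_singleton]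
    abel

-- the face argument
lemma hull_face {s : Finset (EuclideanSpace ℝ (Fin n))} {w : EuclideanSpace ℝ (Fin n)} {Mv : ℝ}
    (hM : ∀ v ∈ s, (inner ℝ w v : ℝ) ≤ Mv) :
    ∀ x ∈ convexHull ℝ (↑s : Set (EuclideanSpace ℝ (Fin n))), (inner ℝ w x : ℝ) = Mv →
      x ∈ convexHull ℝ (↑(s.filter fun v => Mv ≤ (inner ℝ w v : ℝ)) :
        Set (EuclideanSpace ℝ (Fin n))) := by
  classical
  intro x hx hfx
  rw [Finset.convexHull_eq] at hx
  obtain ⟨μ, hμ0, hμ1, hμx⟩ := hx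
  have hxsum : x = ∑ y ∈ s, μ y • y := by
    rw [← hμx, Finset.centerMass_eq_of_sum_1 _ _ hμ1]
    simp only [id_eq]
  have hfsum : (inner ℝ w x : ℝ) = ∑ y ∈ s, μ y * (inner ℝ w y : ℝ) := by
    rw [hxsum, inner_sum]
    refine Finset.sum_congr rfl fun y _ => ?_
    rw [real_inner_smul_right]
  have hzero : ∑ y ∈ s, μ y * (Mv - (inner ℝ w y : ℝ)) = 0 := by
    have : ∑ y ∈ s, μ y * (Mv - (inner ℝ w y : ℝ))
        = (∑ y ∈ s, μ y) * Mv - ∑ y ∈ s, μ y * (inner ℝ w y : ℝ) := by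
      rw [Finset.sum_mul, ← Finset.sum_sub_distrib]
      exact Finset.sum_congr rfl fun y _ => by ring
    rw [this, hμ1, ← hfsum, hfx]; ring
  have hall : ∀ y ∈ s, μ y ≠ 0 → Mv ≤ (inner ℝ w y : ℝ) := by
    intro y hy hμy
    have h0 := (Finset.sum_eq_zero_iff_of_nonneg fun i hi =>
      mul_nonneg (hμ0 i hi) (sub_nonneg.2 (hM i hi))).1 hzero y hy
    have : Mv - (inner ℝ w y : ℝ) = 0 := by
      rcases mul_eq_zero.1 h0 with h | h
      · exact absurd h hμy
      · exact h
    linarith [this]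
  rw [Finset.convexHull_eq]
  refine ⟨μ, fun y hy => hμ0 y (Finset.mem_filter.1 hy).1, ?_, ?_⟩
  · rw [Finset.sum_filter_of_ne fun y hy hne => hall y hy hne]; exact hμ1
  · have hsum1 : ∑ y ∈ s.filter (fun v => Mv ≤ (inner ℝ w v : ℝ)), μ y = 1 := by
      rw [Finset.sum_filter_of_ne fun y hy hne => hall y hy hne]; exact hμ1
    rw [Finset.centerMass_eq_of_sum_1 _ _ hsum1]
    simp only [id_eq]
    rw [Finset.sum_filter_of_ne, ← hxsum]
    intro y hy hne
    exact hall y hy fun h0 => hne (by rw [h0, zero_smul])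

lemma exists_diff_dir : ∀ (N : ℕ) (s : Finset (EuclideanSpace ℝ (Fin n))), s.card ≤ N →
    s.Nonempty → ∀ z : EuclideanSpace ℝ (Fin n), z ≠ 0 →
    Wide (convexHull ℝ ↑s) z → ∃ a ∈ s, ∃ b ∈ s, ∃ t : ℝ, z = t • (a - b) := by
  intro N
  induction N with
  | zero =>
    intro s hcard hne
    obtain ⟨a, ha⟩ := hne
    simp [Finset.card_eq_zero] at hcard
    simp [hcard] at ha
  | succ N ih =>
    intro s hcard hne z hz hw
    classical
    by_cases hA : ∀ a ∈ s, ∀ b ∈ s, ∃ t : ℝ, a - b = t • z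
    · by_cases hA2 : ∀ a ∈ s, ∀ b ∈ s, a = b
      · obtain ⟨a₀, ha₀⟩ := hne
        have hs : (↑s : Set (EuclideanSpace ℝ (Fin n))) = {a₀} := by
          ext v
          simp only [Finset.coe_sort_coe, Set.mem_singleton_iff, Finset.mem_coe]
          exact ⟨fun hv => hA2 v hv a₀ ha₀, fun hv => hv ▸ ha₀⟩
        rw [hs, convexHull_singleton] at hw
        obtain ⟨y, hy, hyz, -⟩ := hw a₀ rfl
        rw [Set.mem_singleton_iff] at hy hyz
        have hz0 : z = (y + z) - y := by abel
        rw [hyz, hy, sub_self] at hz0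
        exact absurd hz0 hz
      · push_neg at hA2
        obtain ⟨a₀, ha₀, b₀, hb₀, hab⟩ := hA2
        obtain ⟨t, htt⟩ := hA a₀ ha₀ b₀ hb₀
        have ht0 : t ≠ 0 := by
          intro h0; rw [h0, zero_smul, sub_eq_zero] at htt; exact hab htt
        exact ⟨a₀, ha₀, b₀, hb₀, t⁻¹, by rw [htt, smul_smul, inv_mul_cancel₀ ht0, one_smul]⟩
    · push_neg at hA
      obtain ⟨a₀, ha₀, b₀, hb₀, hnp⟩ := hA
      set c : ℝ := (inner ℝ z (a₀ - b₀) : ℝ) / ‖z‖ ^ 2 with hc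
      set w : EuclideanSpace ℝ (Fin n) := (a₀ - b₀) - c • z with hwdef
      have hzn : ‖z‖ ^ 2 ≠ 0 := pow_ne_zero 2 (norm_ne_zero_iff.2 hz)
      have hzw : (inner ℝ z w : ℝ) = 0 := by
        have : (inner ℝ z w : ℝ) = inner ℝ z (a₀ - b₀) - c * inner ℝ z z := by
          simp only [hwdef, inner_sub_right, real_inner_smul_right]
        rw [this, real_inner_self_eq_norm_sq, hc, div_mul_cancel₀ _ hzn, sub_self]
      have hw0 : w ≠ 0 := by
        intro h
        apply hnp c
        rw [hwdef, sub_eq_zero] at h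
        exact h
      have hwz0 : (inner ℝ w z : ℝ) = 0 := by rw [real_inner_comm]; exact hzw
      have hwab : (inner ℝ w (a₀ - b₀) : ℝ) = ‖w‖ ^ 2 := by
        have hab' : a₀ - b₀ = w + c • z := by rw [hwdef]; abel
        rw [hab', inner_add_right, real_inner_smul_right, hwz0, real_inner_self_eq_norm_sq]
        ring
      have hfab : (inner ℝ w a₀ : ℝ) ≠ inner ℝ w b₀ := by
        intro heq
        have : (inner ℝ w (a₀ - b₀) : ℝ) = 0 := by rw [inner_sub_right, heq, sub_self]
        rw [hwab] at this
        exact pow_ne_zero 2 (norm_ne_zero_iff.2 hw0) this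
      obtain ⟨vm, hvm, hvmax⟩ := s.exists_max_image (fun v => (inner ℝ w v : ℝ)) hne
      set Mv : ℝ := (inner ℝ w vm : ℝ) with hMv
      set T : Finset (EuclideanSpace ℝ (Fin n)) :=
        s.filter (fun v => Mv ≤ (inner ℝ w v : ℝ)) with hT
      have hTs : T ⊆ s := Finset.filter_subset _ _
      have hvmT : vm ∈ T := Finset.mem_filter.2 ⟨hvm, le_rfl⟩
      -- some element not in T
      have hsmaller : ∃ u ∈ s, u ∉ T := by
        rcases lt_or_gt_of_ne hfab with h | h
        · exact ⟨a₀, ha₀, fun hmem => by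
            have := (Finset.mem_filter.1 hmem).2
            have h2 := hvmax b₀ hb₀
            simp only [hMv] at this
            linarith⟩
        · exact ⟨b₀, hb₀, fun hmem => by
            have := (Finset.mem_filter.1 hmem).2
            have h2 := hvmax a₀ ha₀
            simp only [hMv] at this
            linarith⟩
      obtain ⟨u, hu, huT⟩ := hsmaller
      have hcardT : T.card < s.card :=
        Finset.card_lt_card ⟨hTs, fun hsub => huT (hsub hu)⟩
      -- Wide on the face
      have hfle : ∀ x ∈ convexHull ℝ (↑s : Set (EuclideanSpace ℝ (Fin n))),
          (inner ℝ w x : ℝ) ≤ Mv := by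
        intro x hx
        have hconv : Convex ℝ {x : EuclideanSpace ℝ (Fin n) | (inner ℝ w x : ℝ) ≤ Mv} := by
          intro p hp q hq a b ha hb hab
          simp only [Set.mem_setOf_eq] at hp hq ⊢
          rw [inner_add_right, real_inner_smul_right, real_inner_smul_right]
          have h3 : a * Mv + b * Mv = Mv := by rw [← add_mul, hab, one_mul]
          nlinarith [mul_le_mul_of_nonneg_left hp ha, mul_le_mul_of_nonneg_left hq hb]
        exact convexHull_min (fun v hv => hvmax v hv) hconv hx
      have hfT : ∀ x ∈ convexHull ℝ (↑T : Set (EuclideanSpace ℝ (Fin n))),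
          (inner ℝ w x : ℝ) = Mv := by
        intro x hx
        have hconv : Convex ℝ {x : EuclideanSpace ℝ (Fin n) | (inner ℝ w x : ℝ) = Mv} := by
          intro p hp q hq a b ha hb hab
          simp only [Set.mem_setOf_eq] at hp hq ⊢
          rw [inner_add_right, real_inner_smul_right, real_inner_smul_right, hp, hq,
            ← add_mul, hab, one_mul]
        refine convexHull_min (fun v hv => ?_) hconv hx
        have h1 := (Finset.mem_filter.1 hv).2
        have h2 := hvmax v (hTs hv)
        exact le_antisymm h2 h1
      have hwT : Wide (convexHull ℝ (↑T : Set (EuclideanSpace ℝ (Fin n)))) z := by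
        intro x hx
        have hxs : x ∈ convexHull ℝ (↑s : Set (EuclideanSpace ℝ (Fin n))) :=
          convexHull_mono (Finset.coe_subset.2 hTs) hx
        obtain ⟨y, hy, hyz, hseg⟩ := hw x hxs
        rw [mem_segment_iff] at hseg
        obtain ⟨σ, h0, h1, hxeq⟩ := hseg
        have hfx : (inner ℝ w x : ℝ) = Mv := hfT x hx
        have hfy : (inner ℝ w y : ℝ) = Mv := by
          have : (inner ℝ w x : ℝ) = inner ℝ w y + σ * inner ℝ w z := by
            rw [hxeq, inner_add_right, real_inner_smul_right]
          rw [hwz0, mul_zero, add_zero] at this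
          rw [← this, hfx]
        have hfyz : (inner ℝ w (y + z) : ℝ) = Mv := by
          rw [inner_add_right, hwz0, add_zero, hfy]
        refine ⟨y, hull_face hvmax y hy hfy, hull_face hvmax (y + z) hyz hfyz, ?_⟩
        rw [mem_segment_iff]
        exact ⟨σ, h0, h1, hxeq⟩
      obtain ⟨a, ha, b, hb, t, hteq⟩ := ih T (by omega) ⟨vm, hvmT⟩ z hz hwT
      exact ⟨a, hTs ha, b, hTs hb, t, hteq⟩

open Classical in
noncomputable def reduceDirs : List (EuclideanSpace ℝ (Fin n)) → List (EuclideanSpace ℝ (Fin n))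
  | [] => []
  | v :: l =>
    if ∃ d ∈ reduceDirs l, ∃ t : ℝ, v = t • d then reduceDirs l else v :: reduceDirs l

lemma reduceDirs_subset (l : List (EuclideanSpace ℝ (Fin n))) :
    ∀ x ∈ reduceDirs l, x ∈ l := by
  induction l with
  | nil => simp [reduceDirs]
  | cons v l ih =>
    intro x hx
    rw [reduceDirs] at hx
    split at hx
    · exact List.mem_cons_of_mem _ (ih x hx)
    · rcases List.mem_cons.1 hx with h | h
      · exact h ▸ List.mem_cons_self
      · exact List.mem_cons_of_mem _ (ih x h)

lemma reduceDirs_complete (l : List (EuclideanSpace ℝ (Fin n))) :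
    ∀ v ∈ l, ∃ d ∈ reduceDirs l, ∃ t : ℝ, v = t • d := by
  induction l with
  | nil => simp
  | cons v l ih =>
    intro x hx
    rw [reduceDirs]
    split
    · rename_i hcond
      rcases List.mem_cons.1 hx with h | h
      · exact h ▸ hcond
      · exact ih x h
    · rcases List.mem_cons.1 hx with h | h
      · exact ⟨v, List.mem_cons_self, 1, by rw [h, one_smul]⟩
      · obtain ⟨d, hd, t, ht⟩ := ih x h
        exact ⟨d, List.mem_cons_of_mem _ hd, t, ht⟩

lemma reduceDirs_pairwise (l : List (EuclideanSpace ℝ (Fin n))) :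
    (reduceDirs l).Pairwise (fun a b => ∀ t : ℝ, a ≠ t • b) := by
  induction l with
  | nil => simp [reduceDirs]
  | cons v l ih =>
    rw [reduceDirs]
    split
    · exact ih
    · rename_i hcond
      push_neg at hcond
      exact List.pairwise_cons.2 ⟨fun d hd t ht => hcond d hd t ht, ih⟩

-- === block E: symmetric zonotope helpers ===
lemma neg_seg0 (v : V) : -(segment ℝ 0 v) = {-v} + segment ℝ 0 v := by
  ext x
  simp only [Set.mem_neg, Set.singleton_add, Set.image_add_left, Set.mem_preimage]
  rw [mem_segment_zero_iff, mem_segment_zero_iff]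
  constructor
  · rintro ⟨σ, h0, h1, hx⟩
    refine ⟨1 - σ, by linarith, by linarith, ?_⟩
    have hx' : x = -(σ • v) := by rw [← hx]; simp
    rw [hx']; module
  · rintro ⟨σ, h0, h1, hx⟩
    refine ⟨1 - σ, by linarith, by linarith, ?_⟩
    have hx' : x = -v + σ • v := by rw [← hx]; module
    rw [hx']; module

lemma zono_shift_list (l : List (EuclideanSpace ℝ (Fin n))) (q : EuclideanSpace ℝ (Fin n)) :
    IsZonotope ({q} + (l.map fun v => segment ℝ 0 v).sum : Set (EuclideanSpace ℝ (Fin n))) := by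
  induction l generalizing q with
  | nil =>
    refine ⟨1, fun _ => q, fun _ => q, ?_⟩
    simp [segment_same]
  | cons v l ih =>
    obtain ⟨N, a, b, heq⟩ := ih q
    refine ⟨N + 1, Fin.cons 0 a, Fin.cons v b, ?_⟩
    rw [List.map_cons, List.sum_cons, Fin.sum_univ_succ]
    simp only [Fin.cons_zero, Fin.cons_succ]
    rw [← heq]
    abel

lemma neg_list_sum_seg (l : List (EuclideanSpace ℝ (Fin n))) :
    -((l.map fun v => segment ℝ 0 v).sum) = {-(l.sum)} + (l.map fun v => segment ℝ 0 v).sum := by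
  induction l with
  | nil => simp [zero_set_eq]
  | cons v l ih =>
    rw [List.map_cons, List.sum_cons, List.sum_cons, neg_add_rev, ih, neg_seg0]
    rw [show ({-(v + l.sum)} : Set (EuclideanSpace ℝ (Fin n))) = {-l.sum} + {-v} by
      rw [Set.singleton_add_singleton]; congr 1; abel]
    abel

end MaxZono

open MaxZono in
theorem exists_unique_maximal_zonotope_summand {n : ℕ}
    (P : ConvexBody (EuclideanSpace ℝ (Fin n)))
    (hP : ∃ s : Finset (EuclideanSpace ℝ (Fin n)),
      (P : Set (EuclideanSpace ℝ (Fin n))) = convexHull ℝ ↑s) :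
    ∃! Z : Set (EuclideanSpace ℝ (Fin n)),
      IsZonotope Z ∧ Z = -Z ∧ IsSummand Z (P : Set (EuclideanSpace ℝ (Fin n))) ∧
      ∀ Y : Set (EuclideanSpace ℝ (Fin n)), IsZonotope Y →
        IsSummand Y (P : Set (EuclideanSpace ℝ (Fin n))) →
        ∃ x : EuclideanSpace ℝ (Fin n), IsSummand ((fun y => y + x) '' Y) Z := by
  classical
  obtain ⟨s, hs⟩ := hP
  have hPv : Convex ℝ (P : Set (EuclideanSpace ℝ (Fin n))) := P.convex
  have hPc : IsCompact (P : Set (EuclideanSpace ℝ (Fin n))) := P.isCompact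
  have hPn : (P : Set (EuclideanSpace ℝ (Fin n))).Nonempty := P.nonempty
  have hsne : s.Nonempty := by
    rcases Finset.eq_empty_or_nonempty s with h | h
    · exfalso
      rw [h] at hs
      simp only [Finset.coe_empty, convexHull_empty] at hs
      rw [hs] at hPn
      exact Set.not_nonempty_empty hPn
    · exact h
  set Ds : Finset (EuclideanSpace ℝ (Fin n)) :=
    ((s ×ˢ s).image fun p => p.1 - p.2).erase 0 with hDs
  set dirs : List (EuclideanSpace ℝ (Fin n)) := reduceDirs Ds.toList with hdirs
  have hpw : dirs.Pairwise (fun a b => ∀ t : ℝ, a ≠ t • b) := reduceDirs_pairwise _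
  have hnz : ∀ d ∈ dirs, d ≠ 0 := by
    intro d hd
    have h1 := reduceDirs_subset _ d hd
    rw [Finset.mem_toList] at h1
    exact (Finset.mem_erase.1 h1).1
  have hnodup : dirs.Nodup :=
    hpw.imp fun h => fun heq => (h 1 (by rw [one_smul]; exact heq))
  have h0nm : (0 : EuclideanSpace ℝ (Fin n)) ∉ dirs.toFinset := by
    rw [List.mem_toFinset]
    intro h
    exact hnz 0 h rfl
  set wd : EuclideanSpace ℝ (Fin n) → ℝ :=
    fun d => sSup (Tset (P : Set (EuclideanSpace ℝ (Fin n))) d) with hwd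
  have hwdmem : ∀ d ∈ dirs, wd d ∈ Tset (P : Set (EuclideanSpace ℝ (Fin n))) d := by
    intro d hd
    exact (isClosed_Tset hPc d).csSup_mem ⟨0, zero_mem_Tset _ _⟩
      (bddAbove_Tset hPc hPn (hnz d hd))
  have hwd0 : ∀ d ∈ dirs, 0 ≤ wd d := fun d hd => (hwdmem d hd).1
  have hdirfind : ∀ g : EuclideanSpace ℝ (Fin n), g ≠ 0 →
      Wide (P : Set (EuclideanSpace ℝ (Fin n))) g → ∃ d ∈ dirs, ∃ ρ : ℝ, g = ρ • d := by
    intro g hg hwg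
    rw [hs] at hwg
    obtain ⟨a, ha, b, hb, t, hteq⟩ := exists_diff_dir s.card s le_rfl hsne g hg hwg
    have habne : a - b ≠ 0 := by
      intro h
      rw [h, smul_zero] at hteq
      exact hg hteq
    have hmem : a - b ∈ Ds := Finset.mem_erase.2 ⟨habne,
      Finset.mem_image.2 ⟨(a, b), Finset.mem_product.2 ⟨ha, hb⟩, rfl⟩⟩
    obtain ⟨d, hd, t', ht'⟩ := reduceDirs_complete Ds.toList (a - b) (Finset.mem_toList.2 hmem)
    exact ⟨d, hd, t * t', by rw [hteq, ht', smul_smul]⟩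
  obtain ⟨M, hMv, hMc, hMn, hMeq⟩ := peel dirs wd hpw (fun d hd => hwd0 d hd)
    (P : Set (EuclideanSpace ℝ (Fin n))) hPv hPc hPn (fun d hd => (hwdmem d hd).2)
  set Z0 : Set (EuclideanSpace ℝ (Fin n)) :=
    (dirs.map fun d => segment ℝ 0 (wd d • d)).sum with hZ0
  set csum : EuclideanSpace ℝ (Fin n) := (dirs.map fun d => wd d • d).sum with hcsum
  set Z : Set (EuclideanSpace ℝ (Fin n)) := {-((2:ℝ)⁻¹ • csum)} + Z0 with hZ
  have hmapmap : (dirs.map fun d => segment ℝ 0 (wd d • d)) =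
      ((dirs.map fun d => wd d • d).map fun v => segment ℝ 0 v) := by
    rw [List.map_map]
    rfl
  have hZ0fin : Z0 = ∑ d ∈ dirs.toFinset, segment ℝ 0 (wd d • d) := by
    rw [hZ0, List.sum_toFinset _ hnodup]
  have hcsumfin : csum = ∑ d ∈ dirs.toFinset, wd d • d := by
    rw [hcsum, List.sum_toFinset _ hnodup]
  have hZ0props : Convex ℝ Z0 ∧ IsCompact Z0 ∧ Z0.Nonempty := by
    refine list_sum_sets_props _ fun S hS => ?_
    obtain ⟨v, hv, rfl⟩ := List.mem_map.1 hS
    exact seg_props 0 _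
  have hsingprops : ∀ q : EuclideanSpace ℝ (Fin n),
      Convex ℝ ({q} : Set (EuclideanSpace ℝ (Fin n))) ∧
      IsCompact ({q} : Set (EuclideanSpace ℝ (Fin n))) ∧
      ({q} : Set (EuclideanSpace ℝ (Fin n))).Nonempty :=
    fun q => ⟨convex_singleton q, isCompact_singleton, ⟨q, rfl⟩⟩
  have hZprops : Convex ℝ Z ∧ IsCompact Z ∧ Z.Nonempty := by
    rw [hZ]
    exact ⟨(hsingprops _).1.add hZ0props.1, (hsingprops _).2.1.add hZ0props.2.1,
      (hsingprops _).2.2.add hZ0props.2.2⟩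
  have hZzono : IsZonotope Z := by
    rw [hZ, hZ0, hmapmap]
    exact zono_shift_list _ _
  have hZsymm : Z = -Z := by
    have h1 : -Z = -({-((2:ℝ)⁻¹ • csum)} : Set (EuclideanSpace ℝ (Fin n))) + -Z0 := by
      rw [hZ, neg_add_rev]
      exact add_comm _ _
    have h2 : -Z0 = {-csum} + Z0 := by
      rw [hZ0, hmapmap, neg_list_sum_seg, ← hcsum]
    have h3 : -({-((2:ℝ)⁻¹ • csum)} : Set (EuclideanSpace ℝ (Fin n))) = {(2:ℝ)⁻¹ • csum} := by
      rw [Set.neg_singleton, neg_neg]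
    rw [h1, h2, h3, ← add_assoc, Set.singleton_add_singleton]
    have h4 : (2:ℝ)⁻¹ • csum + -csum = -((2:ℝ)⁻¹ • csum) := by module
    rw [h4]
  have hZsummand : IsSummand Z (P : Set (EuclideanSpace ℝ (Fin n))) := by
    refine ⟨{(2:ℝ)⁻¹ • csum} + M, (hsingprops _).1.add hMv, (hsingprops _).2.1.add hMc,
      (hsingprops _).2.2.add hMn, ?_⟩
    rw [hZ]
    have h1 : {-((2:ℝ)⁻¹ • csum)} + Z0 + ({(2:ℝ)⁻¹ • csum} + M) =
        ({-((2:ℝ)⁻¹ • csum)} + {(2:ℝ)⁻¹ • csum}) + (Z0 + M) := by abel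
    rw [h1, Set.singleton_add_singleton, neg_add_cancel, ← zero_set_eq, zero_add, ← hMeq]
  -- ===== maximality =====
  have hZmax : ∀ Y : Set (EuclideanSpace ℝ (Fin n)), IsZonotope Y →
      IsSummand Y (P : Set (EuclideanSpace ℝ (Fin n))) →
      ∃ x : EuclideanSpace ℝ (Fin n), IsSummand ((fun y => y + x) '' Y) Z := by
    rintro Y ⟨N, a, b, rfl⟩ hYsummand
    set g : Fin N → EuclideanSpace ℝ (Fin n) := fun i => b i - a i with hg
    -- each segment is a summand of P
    have hsegsummand : ∀ i : Fin N,
        IsSummand (segment ℝ (a i) (b i)) (P : Set (EuclideanSpace ℝ (Fin n))) := by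
      intro i
      apply isSummand_trans _ hYsummand
      refine ⟨∑ j ∈ Finset.univ.erase i, segment ℝ (a j) (b j), ?_, ?_, ?_, ?_⟩
      · exact (sum_sets_props _ _ fun j _ => seg_props _ _).1
      · exact (sum_sets_props _ _ fun j _ => seg_props _ _).2.1
      · exact (sum_sets_props _ _ fun j _ => seg_props _ _).2.2
      · exact (Finset.add_sum_erase _ _ (Finset.mem_univ i)).symm
    have hwide : ∀ i : Fin N, Wide (P : Set (EuclideanSpace ℝ (Fin n))) (g i) :=
      fun i => wide_of_segment_summand (hsegsummand i)
    -- choose directions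
    have hchoice : ∀ i : Fin N, ∃ dρ : EuclideanSpace ℝ (Fin n) × ℝ,
        (dρ.1 ∈ dirs ∧ g i = dρ.2 • dρ.1) ∨ (g i = 0 ∧ dρ.1 = 0 ∧ dρ.2 = 0) := by
      intro i
      by_cases hgi : g i = 0
      · exact ⟨(0, 0), Or.inr ⟨hgi, rfl, rfl⟩⟩
      · obtain ⟨d, hd, ρ, hρ⟩ := hdirfind (g i) hgi (hwide i)
        exact ⟨(d, ρ), Or.inl ⟨hd, hρ⟩⟩
    choose dρ hdρ using hchoice
    set D : Fin N → EuclideanSpace ℝ (Fin n) := fun i => (dρ i).1 with hD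
    set ρ : Fin N → ℝ := fun i => (dρ i).2 with hρdef
    have hgid : ∀ i, g i = ρ i • D i := by
      intro i
      rcases hdρ i with h | h
      · exact h.2
      · rw [h.1]
        simp only [hρdef, hD, h.2.1, h.2.2, zero_smul]
    set γ : Fin N → ℝ := fun i => |ρ i| with hγ
    set sh : Fin N → EuclideanSpace ℝ (Fin n) := fun i => if 0 ≤ ρ i then 0 else g i with hsh
    have hsegshift : ∀ i, segment ℝ 0 (g i) = {sh i} + segment ℝ 0 (γ i • D i) := by
      intro i
      by_cases hρi : 0 ≤ ρ i
      · have h1 : γ i = ρ i := abs_of_nonneg hρi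
        rw [hsh]
        simp only [hρi, if_true]
        rw [h1, ← hgid i, ← zero_set_eq, zero_add]
      · push_neg at hρi
        have h1 : γ i • D i = -(g i) := by
          rw [hγ]
          simp only
          rw [abs_of_neg hρi, hgid i, neg_smul]
        rw [hsh]
        simp only [not_le.2 hρi, if_false]
        rw [h1, ← seg0_neg]
    -- regroup Y
    have hY1 : ∑ i : Fin N, segment ℝ (a i) (b i) =
        {∑ i : Fin N, (a i + sh i)} + ∑ i : Fin N, segment ℝ 0 (γ i • D i) := by
      have e1 : ∀ i : Fin N, segment ℝ (a i) (b i) =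
          {a i + sh i} + segment ℝ 0 (γ i • D i) := by
        intro i
        rw [segment_eq_add_seg0]
        have hgi : segment ℝ 0 (b i - a i) = segment ℝ 0 (g i) := rfl
        rw [hgi, hsegshift i, ← add_assoc, Set.singleton_add_singleton]
      rw [Finset.sum_congr rfl fun i _ => e1 i, sum_singleton_add]
    -- fiberwise regrouping
    set TF : Finset (EuclideanSpace ℝ (Fin n)) := insert 0 dirs.toFinset with hTF
    have hmapsto : ∀ i ∈ Finset.univ (α := Fin N), D i ∈ TF := by
      intro i _
      rcases hdρ i with h | h
      · exact Finset.mem_insert_of_mem (List.mem_toFinset.2 h.1)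
      · rw [hD]; simp only; rw [h.2.1]; exact Finset.mem_insert_self _ _
    set τ : EuclideanSpace ℝ (Fin n) → ℝ :=
      fun d => ∑ i ∈ Finset.univ.filter (fun i => D i = d), γ i with hτ
    have hτ0 : ∀ d, 0 ≤ τ d := fun d => Finset.sum_nonneg fun i _ => abs_nonneg _
    have hY2 : ∑ i : Fin N, segment ℝ 0 (γ i • D i) =
        ∑ d ∈ TF, segment ℝ 0 (τ d • d) := by
      rw [← Finset.sum_fiberwise_of_maps_to hmapsto (fun i => segment ℝ 0 (γ i • D i))]
      refine Finset.sum_congr rfl fun d hd => ?_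
      rw [hτ]
      simp only
      rw [← seg_sum_same_dir _ _ (fun i _ => abs_nonneg _) d]
      refine Finset.sum_congr rfl fun i hi => ?_
      rw [(Finset.mem_filter.1 hi).2]
    have hTFsum : ∀ κ : EuclideanSpace ℝ (Fin n) → ℝ, ∑ d ∈ TF, segment ℝ 0 (κ d • d) =
        ∑ d ∈ dirs.toFinset, segment ℝ 0 (κ d • d) := by
      intro κ
      rw [hTF, Finset.sum_insert h0nm, smul_zero, segment_same, ← zero_set_eq, zero_add]
    -- τ d ≤ wd d
    have hτle : ∀ d ∈ dirs.toFinset, τ d ≤ wd d := by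
      intro d hd
      have hdd : d ∈ dirs := List.mem_toFinset.1 hd
      have hsummand : IsSummand (segment ℝ 0 (τ d • d)) (P : Set (EuclideanSpace ℝ (Fin n))) := by
        apply isSummand_trans _ hYsummand
        refine ⟨{∑ i : Fin N, (a i + sh i)} + ∑ d' ∈ TF.erase d, segment ℝ 0 (τ d' • d'), ?_, ?_, ?_, ?_⟩
        · exact (hsingprops _).1.add (sum_sets_props _ _ fun j _ => seg_props _ _).1
        · exact (hsingprops _).2.1.add (sum_sets_props _ _ fun j _ => seg_props _ _).2.1
        · exact (hsingprops _).2.2.add (sum_sets_props _ _ fun j _ => seg_props _ _).2.2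
        · rw [hY1, hY2]
          have hdTF : d ∈ TF := Finset.mem_insert_of_mem hd
          rw [← Finset.add_sum_erase _ _ hdTF]
          abel
      have hwideτ : Wide (P : Set (EuclideanSpace ℝ (Fin n))) (τ d • d) := by
        have := wide_of_segment_summand (K := (P : Set (EuclideanSpace ℝ (Fin n))))
          (a := 0) (b := τ d • d)
        simp only [sub_zero] at this
        exact this hsummand
      exact le_csSup (bddAbove_Tset hPc hPn (hnz d hdd)) ⟨hτ0 d, hwideτ⟩
    -- the witness translation
    refine ⟨-(∑ i : Fin N, (a i + sh i)) - (2:ℝ)⁻¹ • csum, ?_⟩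
    refine ⟨∑ d ∈ dirs.toFinset, segment ℝ 0 ((wd d - τ d) • d), ?_, ?_, ?_, ?_⟩
    · exact (sum_sets_props _ _ fun j _ => seg_props _ _).1
    · exact (sum_sets_props _ _ fun j _ => seg_props _ _).2.1
    · exact (sum_sets_props _ _ fun j _ => seg_props _ _).2.2
    · -- Z = (image) + ∑ (wd-τ) segments
      rw [← Set.add_singleton]
      rw [hY1, hY2, hTFsum]
      have hcomb : ∑ d ∈ dirs.toFinset, segment ℝ 0 (τ d • d) +
          ∑ d ∈ dirs.toFinset, segment ℝ 0 ((wd d - τ d) • d) =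
          ∑ d ∈ dirs.toFinset, segment ℝ 0 (wd d • d) := by
        rw [← Finset.sum_add_distrib]
        refine Finset.sum_congr rfl fun d hd => ?_
        rw [seg_add_seg (hτ0 d) (by linarith [hτle d hd]) d]
        congr 2
        ring
      have hrw : {∑ i : Fin N, (a i + sh i)} +
          (∑ d ∈ dirs.toFinset, segment ℝ 0 (τ d • d)) +
          {-(∑ i : Fin N, (a i + sh i)) - (2:ℝ)⁻¹ • csum} +
          ∑ d ∈ dirs.toFinset, segment ℝ 0 ((wd d - τ d) • d) =
          ({∑ i : Fin N, (a i + sh i)} + {-(∑ i : Fin N, (a i + sh i)) - (2:ℝ)⁻¹ • csum}) +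
          (∑ d ∈ dirs.toFinset, segment ℝ 0 (τ d • d) +
            ∑ d ∈ dirs.toFinset, segment ℝ 0 ((wd d - τ d) • d)) := by abel
      rw [hZ, hrw, hcomb, Set.singleton_add_singleton, ← hZ0fin]
      congr 2
      module
  refine ⟨Z, ⟨hZzono, hZsymm, hZsummand, hZmax⟩, ?_⟩
  -- ===== uniqueness =====
  rintro Y ⟨hYzono, hYsymm, hYsummand, hYmax⟩
  obtain ⟨x, M₁, hM₁v, hM₁c, hM₁n, hYeq⟩ := hYmax Z hZzono hZsummand
  obtain ⟨y, M₂, hM₂v, hM₂c, hM₂n, hZeq⟩ := hZmax Y hYzono hYsummand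
  rw [← Set.add_singleton] at hYeq hZeq
  have hZZ : Z = Z + ({x + y} + (M₁ + M₂)) := by
    calc Z = Y + {y} + M₂ := hZeq
    _ = (Z + {x} + M₁) + {y} + M₂ := by rw [← hYeq]
    _ = Z + ({x} + {y} + (M₁ + M₂)) := by abel
    _ = Z + ({x + y} + (M₁ + M₂)) := by rw [Set.singleton_add_singleton]
  have hD0 : ({x + y} + (M₁ + M₂) : Set (EuclideanSpace ℝ (Fin n))) = {0} :=
    add_self_cancel hZprops.2.1 hZprops.2.2
      ((Set.singleton_nonempty (x + y)).add (hM₁n.add hM₂n)) hZZ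
  obtain ⟨m₂, hm₂⟩ := hM₂n
  have hM₁eq : ∀ m ∈ M₁, m = -(x + y) - m₂ := by
    intro m hm
    have h1 : (x + y) + (m + m₂) ∈ ({x + y} + (M₁ + M₂) : Set (EuclideanSpace ℝ (Fin n))) :=
      Set.add_mem_add rfl (Set.add_mem_add hm hm₂)
    rw [hD0, Set.mem_singleton_iff] at h1
    calc m = (x + y) + (m + m₂) - (x + y) - m₂ := by abel
    _ = 0 - (x + y) - m₂ := by rw [h1]
    _ = -(x + y) - m₂ := by abel
  obtain ⟨m₁, hm₁⟩ := hM₁n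
  have hM₁sing : M₁ = {-(x + y) - m₂} := by
    ext m
    rw [Set.mem_singleton_iff]
    exact ⟨fun hm => hM₁eq m hm, fun hm => hm ▸ (hM₁eq m₁ hm₁ ▸ hm₁)⟩
  set e : EuclideanSpace ℝ (Fin n) := x + (-(x + y) - m₂) with he
  have hYZe : Y = Z + {e} := by
    rw [hYeq, hM₁sing, add_assoc, Set.singleton_add_singleton, he]
  have hYZnege : Y = Z + {-e} := by
    calc Y = -Y := hYsymm
    _ = -(Z + {e}) := by rw [← hYZe]
    _ = -{e} + -Z := neg_add_rev _ _
    _ = {-e} + -Z := by rw [Set.neg_singleton]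
    _ = {-e} + Z := by rw [← hZsymm]
    _ = Z + {-e} := add_comm _ _
  have hZshift : Z = Z + {e + e} := by
    calc Z = Z + ({-e} + {e}) := by
          rw [Set.singleton_add_singleton, neg_add_cancel, ← zero_set_eq, add_zero]
    _ = (Z + {-e}) + {e} := by abel
    _ = (Z + {e}) + {e} := by rw [← hYZnege, ← hYZe]
    _ = Z + {e + e} := by rw [add_assoc, Set.singleton_add_singleton]
  have hee : ({e + e} : Set (EuclideanSpace ℝ (Fin n))) = {0} :=
    add_self_cancel hZprops.2.1 hZprops.2.2 ⟨e + e, rfl⟩ hZshift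
  have he0 : e = 0 := by
    have h1 : e + e = 0 := by
      have := hee
      rw [Set.singleton_eq_singleton_iff] at this
      exact this
    have h2 : (2 : ℝ) • e = 0 := by rw [two_smul]; exact h1
    have h3 := congrArg (fun v => (2: ℝ)⁻¹ • v) h2
    simpa [smul_smul] using h3
  rw [hYZe, he0, ← zero_set_eq, add_zero]
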